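/- Let ρ : V^{⊕m} → M_n(ℂ) be a surjective linear map (V = ℂ^n, identifying V^{⊕n} with n×n matrices), and let D_ρ = ρ^{-1}({det = 0}). Then a vector a ∈ V^{⊕m} satisfies a + v ∈ D_ρ for all v ∈ D_ρ if and only if ρ(a) = 0. -/

import Mathlib

open Matrix Equiv

lemma exists_singular_add_det_ne_zero {n : ℕ} (B : Matrix (Fin n) (Fin n) ℂ) (hB : B ≠ 0) :
    ∃ X : Matrix (Fin n) (Fin n) ℂ, X.det = 0 ∧ (B + X).det ≠ 0 := by
  obtain ⟨i, j, hij⟩ : ∃ i j, B i j ≠ 0 := by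
    by_contra h; push_neg at h
    exact hB (by ext i j; simp [h])
  set σ : Equiv.Perm (Fin n) := Equiv.swap i j with hσdef
  have hσi : σ i = j := Equiv.swap_apply_left i j
  set M : Matrix (Fin n) (Fin n) ℂ :=
    Matrix.of (fun k l => if k = i then B i l else if l = σ k then 1 else 0) with hM
  have hMdet : M.det ≠ 0 := by
    rw [Matrix.det_apply]
    rw [Finset.sum_eq_single σ⁻¹]
    · have hprod : (∏ l, M (σ⁻¹ l) l) = B i j := by
        rw [Finset.prod_eq_single j]
        · have : σ⁻¹ j = i := by rw [← hσi]; simp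
          simp [M, this]
        · intro l _ hl
          have h1 : σ⁻¹ l ≠ i := by
            intro h; apply hl; rw [← hσi, ← h]; simp
          have h2 : l = σ (σ⁻¹ l) := by simp
          simp [M, h1, ← h2]
          exact fun h => absurd h h1
        · simp
      rw [hprod]
      rcases Int.units_eq_one_or (Equiv.Perm.sign σ⁻¹) with hs | hs <;>
        simp [hs, hij]
    · intro τ _ hτ
      have : (∏ l, M (τ l) l) = 0 := by
        -- find a column l with factor 0
        have : ∃ l, τ l ≠ i ∧ l ≠ σ (τ l) := by
          by_contra hc
          push_neg at hc
          apply hτ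
          apply Equiv.ext
          intro l
          by_cases h0 : τ l = i
          · -- show σ⁻¹ l = i too, i.e. l = σ i = j
            by_cases hlj : l = j
            · rw [h0, hlj, ← hσi]; simp
            · exfalso
              have hji : τ j ≠ i := by
                intro h'; exact hlj (τ.injective (h0.trans h'.symm))
              have h4 : τ j = σ.symm j := (Equiv.eq_symm_apply σ).mpr (hc j hji).symm
              have h5 : σ.symm j = i := by simp [hσdef]
              exact hji (h4.trans h5)
          · show τ l = σ.symm l
            exact (Equiv.eq_symm_apply σ).mpr (hc l h0).symm
        obtain ⟨l, h1, h2⟩ := this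
        apply Finset.prod_eq_zero (Finset.mem_univ l)
        simp [M, h1, h2]
      rw [this, smul_zero]
    · simp
  refine ⟨M - B, ?_, ?_⟩
  · apply Matrix.det_eq_zero_of_row_eq_zero i
    intro l
    simp [M]
  · have hMe : B + (M - B) = M := by abel
    rw [hMe]; exact hMdet

theorem translation_preserving_determinantal (n m : ℕ)
    (ρ : (Fin m → Fin n → ℂ) →ₗ[ℂ] Matrix (Fin n) (Fin n) ℂ)
    (hρ : Function.Surjective ρ) (a : Fin m → Fin n → ℂ) :
    (∀ v : Fin m → Fin n → ℂ, (ρ v).det = 0 → (ρ (a + v)).det = 0) ↔ ρ a = 0 := by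
  constructor
  · intro h
    by_contra hB
    obtain ⟨X, hX0, hXB⟩ := exists_singular_add_det_ne_zero (ρ a) hB
    obtain ⟨v, hv⟩ := hρ X
    have := h v (by rw [hv]; exact hX0)
    rw [map_add, hv] at this
    exact hXB this
  · intro h v hv
    rw [map_add, h, zero_add]
    exact hv
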